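/- Let r : {(x,y) ∈ ℝ² : x > 0, y > 0} → ℝ³ be given by r(x,y) = ( −y((3/2)ln x + 3 ln y + x), x^{−3/2} y^{−2} √(1+x), y ). Then for all x > 0, y > 0 the 3×3 determinants of its partial derivatives satisfy: det[∂ₓr, ∂ᵧr, ∂ₓₓr] = (1/8)(4x+3)(2x+3)² / (x^{9/2} y (1+x)^{3/2}), det[∂ₓr, ∂ᵧr, ∂ₓᵧr] = (3/4)(2x+3)² / (x^{7/2} y² √(1+x)), and det[∂ₓr, ∂ᵧr, ∂ᵧᵧr] = (3/2)(2x+3)² / (x^{5/2} y³ √(1+x)). -/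

import Mathlib

/-- Hildebrand's parametrization of the case-1 complete hyperbolic affine sphere. -/
noncomputable def r (x y : ℝ) : Fin 3 → ℝ :=
  ![ -y * ((3 / 2) * Real.log x + 3 * Real.log y + x),
     x ^ (-(3 : ℝ) / 2) * y ^ (-(2 : ℝ)) * Real.sqrt (1 + x),
     y ]

/-- `∂ₓ r`. -/
noncomputable def rx (x y : ℝ) : Fin 3 → ℝ := fun i => deriv (fun s => r s y i) x
/-- `∂ᵧ r`. -/
noncomputable def ry (x y : ℝ) : Fin 3 → ℝ := fun i => deriv (fun s => r x s i) y
/-- `∂ₓₓ r`. -/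
noncomputable def rxx (x y : ℝ) : Fin 3 → ℝ := fun i => deriv (fun s => rx s y i) x
/-- `∂ₓᵧ r`. -/
noncomputable def rxy (x y : ℝ) : Fin 3 → ℝ := fun i => deriv (fun s => rx x s i) y
/-- `∂ᵧᵧ r`. -/
noncomputable def ryy (x y : ℝ) : Fin 3 → ℝ := fun i => deriv (fun s => ry x s i) y

namespace Blaschke

noncomputable def g (a b s : ℝ) : ℝ := s ^ a * (1 + s) ^ b

lemma hasDerivAt_g (a b : ℝ) {x : ℝ} (hx : 0 < x) :
    HasDerivAt (fun s => g a b s) (a * g (a - 1) b x + b * g a (b - 1) x) x := by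
  have h1x : (0:ℝ) < 1 + x := by linarith
  have h1 : HasDerivAt (fun s : ℝ => s ^ a) (a * x ^ (a - 1)) x :=
    Real.hasDerivAt_rpow_const (Or.inl hx.ne')
  have h2 : HasDerivAt (fun s : ℝ => (1 + s) ^ b) (b * (1 + x) ^ (b - 1) * 1) x :=
    (Real.hasDerivAt_rpow_const (p := b) (Or.inl h1x.ne')).comp x ((hasDerivAt_id x).const_add 1)
  have h := h1.fun_mul h2
  simp only [g]
  refine h.congr_deriv ?_
  ring

/-- `z ^ c = √z / z ^ n` when `c + n = 1/2`. -/
lemma rpow_up {z : ℝ} (hz : 0 < z) (n : ℕ) (c : ℝ) (h : c + n = 1 / 2) :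
    z ^ c = Real.sqrt z / z ^ n := by
  have hc : c = 1 / 2 - ((n : ℕ) : ℝ) := by linarith
  rw [hc, Real.rpow_sub hz, Real.rpow_natCast, ← Real.sqrt_eq_rpow]

/-- `z ^ c = z ^ n / √z` when `c + 1/2 = n`. -/
lemma rpow_downpos {z : ℝ} (hz : 0 < z) (n : ℕ) (c : ℝ) (h : c + 1 / 2 = n) :
    z ^ c = z ^ n / Real.sqrt z := by
  have hc : c = ((n : ℕ) : ℝ) - 1 / 2 := by linarith
  rw [hc, Real.rpow_sub hz, Real.rpow_natCast, ← Real.sqrt_eq_rpow]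

/-- `z ^ c = (z ^ n * √z)⁻¹` when `c + 1/2 + n = 0`. -/
lemma rpow_downneg {z : ℝ} (hz : 0 < z) (n : ℕ) (c : ℝ) (h : c + 1 / 2 + n = 0) :
    z ^ c = (z ^ n * Real.sqrt z)⁻¹ := by
  have hc : c = -(((n : ℕ) : ℝ) + 1 / 2) := by linarith
  rw [hc, Real.rpow_neg hz.le, Real.rpow_add hz, Real.rpow_natCast, ← Real.sqrt_eq_rpow]

/-- `z ^ c = z ^ n * √z` when `c = n + 1/2`. -/
lemma rpow_uppos {z : ℝ} (hz : 0 < z) (n : ℕ) (c : ℝ) (h : c = n + 1 / 2) :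
    z ^ c = z ^ n * Real.sqrt z := by
  have hc : c = ((n : ℕ) : ℝ) + 1 / 2 := by linarith
  rw [hc, Real.rpow_add hz, Real.rpow_natCast, ← Real.sqrt_eq_rpow]

/-- `z ^ c = (z ^ n)⁻¹` when `c + n = 0`. -/
lemma rpow_negnat {z : ℝ} (hz : 0 < z) (n : ℕ) (c : ℝ) (h : c + n = 0) :
    z ^ c = (z ^ n)⁻¹ := by
  have hc : c = -((n : ℕ) : ℝ) := by linarith
  rw [hc, Real.rpow_neg hz.le, Real.rpow_natCast]

lemma rx0' {x : ℝ} (hx : 0 < x) (y : ℝ) :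
    rx x y 0 = -y * ((3 / 2) * x⁻¹ + 1) := by
  show deriv (fun s => r s y 0) x = _
  have hf : (fun s : ℝ => r s y 0)
      = fun s => -y * ((3 / 2) * Real.log s + 3 * Real.log y + s) := by
    funext s; simp [r]
  have H : HasDerivAt (fun s : ℝ => -y * ((3 / 2) * Real.log s + 3 * Real.log y + s))
      (-y * ((3 / 2) * x⁻¹ + 1)) x := by
    have h0 : HasDerivAt (fun s : ℝ => (3 / 2) * Real.log s + 3 * Real.log y + s)
        ((3 / 2) * x⁻¹ + 1) x :=
      (((Real.hasDerivAt_log hx.ne').const_mul (3 / 2 : ℝ)).add_const (3 * Real.log y)).add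
        (hasDerivAt_id x)
    exact h0.const_mul (-y)
  rw [hf, H.deriv]

lemma rx1' {x : ℝ} (hx : 0 < x) (y : ℝ) :
    rx x y 1 = (-(3 : ℝ) / 2 * g (-(3 : ℝ) / 2 - 1) (1 / 2) x
      + 1 / 2 * g (-(3 : ℝ) / 2) (1 / 2 - 1) x) * y ^ (-(2 : ℝ)) := by
  show deriv (fun s => r s y 1) x = _
  have hf : (fun s : ℝ => r s y 1)
      = fun s => g (-(3 : ℝ) / 2) (1 / 2) s * y ^ (-(2 : ℝ)) := by
    funext s
    simp only [r, g, Matrix.cons_val_one, Matrix.head_cons, Matrix.cons_val_zero]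
    rw [Real.sqrt_eq_rpow]
    ring
  rw [hf, ((hasDerivAt_g (-(3 : ℝ) / 2) (1 / 2) hx).mul_const (y ^ (-(2 : ℝ)))).deriv]

lemma rx2' (x y : ℝ) : rx x y 2 = 0 := by
  show deriv (fun s => r s y 2) x = _
  have hf : (fun s : ℝ => r s y 2) = fun _ => y := by funext s; simp [r]
  rw [hf, deriv_const]

lemma rx0 {x : ℝ} (hx : 0 < x) (y : ℝ) :
    rx x y 0 = -(y * (2 * x + 3)) / (2 * x) := by
  have hx0 : x ≠ 0 := hx.ne'
  rw [rx0' hx y, eq_div_iff (by positivity : 2 * x ≠ 0)]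
  linear_combination (-3 * y) * (inv_mul_cancel₀ hx0)

lemma rx1 {x y : ℝ} (hx : 0 < x) (hy : 0 < y) :
    rx x y 1 = -((2 * x + 3) * Real.sqrt x) / (2 * x ^ 3 * Real.sqrt (1 + x) * y ^ 2) := by
  have h1x : (0:ℝ) < 1 + x := by linarith
  have hx0 : x ≠ 0 := hx.ne'
  have hy0 : y ≠ 0 := hy.ne'
  rw [rx1' hx y]
  simp only [g]
  rw [rpow_up hx 3 (-(3 : ℝ) / 2 - 1) (by norm_num),
      rpow_up hx 2 (-(3 : ℝ) / 2) (by norm_num),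
      rpow_downpos h1x 1 (1 / 2) (by norm_num),
      rpow_downneg h1x 0 (1 / 2 - 1) (by norm_num),
      rpow_negnat hy 2 (-(2 : ℝ)) (by norm_num)]
  set t := Real.sqrt (1 + x) with ht
  have ht0 : t ≠ 0 := ne_of_gt (by rw [ht]; exact Real.sqrt_pos.mpr h1x)
  field_simp
  ring

lemma ry0 {y : ℝ} (hy : 0 < y) (x : ℝ) :
    ry x y 0 = -((3 / 2) * Real.log x + 3 * Real.log y + x) - 3 := by
  have hy0 : y ≠ 0 := hy.ne'
  show deriv (fun s => r x s 0) y = _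
  have hf : (fun s : ℝ => r x s 0)
      = fun s => -s * ((3 / 2) * Real.log x + 3 * Real.log s + x) := by
    funext s; simp [r]
  have H : HasDerivAt (fun s : ℝ => -s * ((3 / 2) * Real.log x + 3 * Real.log s + x))
      (-1 * ((3 / 2) * Real.log x + 3 * Real.log y + x) + -y * (3 * y⁻¹)) y := by
    have h0 : HasDerivAt (fun s : ℝ => (3 / 2) * Real.log x + 3 * Real.log s + x)
        (3 * y⁻¹) y :=
      (((Real.hasDerivAt_log hy.ne').const_mul (3 : ℝ)).const_add
        ((3 / 2) * Real.log x)).add_const x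
    exact ((hasDerivAt_id y).neg).mul h0
  rw [hf, H.deriv]
  field_simp
  ring

lemma ry1' {y : ℝ} (hy : 0 < y) (x : ℝ) :
    ry x y 1 = (x ^ (-(3 : ℝ) / 2) * (1 + x) ^ ((1 : ℝ) / 2))
      * (-(2 : ℝ) * y ^ (-(2 : ℝ) - 1)) := by
  show deriv (fun s => r x s 1) y = _
  have hf : (fun s : ℝ => r x s 1)
      = fun s => (x ^ (-(3 : ℝ) / 2) * (1 + x) ^ ((1 : ℝ) / 2)) * s ^ (-(2 : ℝ)) := by
    funext s
    simp only [r, Matrix.cons_val_one, Matrix.head_cons, Matrix.cons_val_zero]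
    rw [Real.sqrt_eq_rpow]
    ring
  have H : HasDerivAt
      (fun s : ℝ => (x ^ (-(3 : ℝ) / 2) * (1 + x) ^ ((1 : ℝ) / 2)) * s ^ (-(2 : ℝ)))
      ((x ^ (-(3 : ℝ) / 2) * (1 + x) ^ ((1 : ℝ) / 2)) * (-(2 : ℝ) * y ^ (-(2 : ℝ) - 1))) y :=
    HasDerivAt.const_mul _ (Real.hasDerivAt_rpow_const (Or.inl hy.ne'))
  rw [hf, H.deriv]

lemma ry1 {x y : ℝ} (hx : 0 < x) (hy : 0 < y) :
    ry x y 1 = -(2 * Real.sqrt x * (1 + x)) / (x ^ 2 * Real.sqrt (1 + x) * y ^ 3) := by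
  have h1x : (0:ℝ) < 1 + x := by linarith
  have hx0 : x ≠ 0 := hx.ne'
  have hy0 : y ≠ 0 := hy.ne'
  rw [ry1' hy x,
      rpow_up hx 2 (-(3 : ℝ) / 2) (by norm_num),
      rpow_downpos h1x 1 ((1 : ℝ) / 2) (by norm_num),
      rpow_negnat hy 3 (-(2 : ℝ) - 1) (by norm_num)]
  set t := Real.sqrt (1 + x) with ht
  have ht0 : t ≠ 0 := ne_of_gt (by rw [ht]; exact Real.sqrt_pos.mpr h1x)
  field_simp

lemma ry2 (x y : ℝ) : ry x y 2 = 1 := by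
  show deriv (fun s => r x s 2) y = _
  have hf : (fun s : ℝ => r x s 2) = fun s => s := by funext s; simp [r]
  rw [hf, deriv_id'']

lemma rxx0 {x : ℝ} (hx : 0 < x) (y : ℝ) :
    rxx x y 0 = 3 * y / (2 * x ^ 2) := by
  have hx0 : x ≠ 0 := hx.ne'
  show deriv (fun s => rx s y 0) x = _
  have hev : (fun s => rx s y 0) =ᶠ[nhds x] fun s => -y * ((3 / 2) * s⁻¹ + 1) := by
    filter_upwards [eventually_gt_nhds hx] with s hs
    rw [rx0' hs y]
  have H : HasDerivAt (fun s : ℝ => -y * ((3 / 2) * s⁻¹ + 1))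
      (-y * ((3 / 2) * -(x ^ 2)⁻¹)) x := by
    exact HasDerivAt.const_mul (-y)
      (((hasDerivAt_inv hx.ne').const_mul ((3:ℝ) / 2)).add_const 1)
  rw [hev.deriv_eq, H.deriv]
  field_simp

lemma rxx1 {x y : ℝ} (hx : 0 < x) (hy : 0 < y) :
    rxx x y 1 = (8 * x ^ 2 + 24 * x + 15) * Real.sqrt x
      / (4 * x ^ 4 * (1 + x) * Real.sqrt (1 + x) * y ^ 2) := by
  have h1x : (0:ℝ) < 1 + x := by linarith
  have hx0 : x ≠ 0 := hx.ne'
  have hy0 : y ≠ 0 := hy.ne'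
  show deriv (fun s => rx s y 1) x = _
  have hev : (fun s => rx s y 1) =ᶠ[nhds x] fun s =>
      (-(3 : ℝ) / 2 * g (-(3 : ℝ) / 2 - 1) (1 / 2) s
        + 1 / 2 * g (-(3 : ℝ) / 2) (1 / 2 - 1) s) * y ^ (-(2 : ℝ)) := by
    filter_upwards [eventually_gt_nhds hx] with s hs
    rw [rx1' hs y]
  have H : HasDerivAt (fun s : ℝ =>
      (-(3 : ℝ) / 2 * g (-(3 : ℝ) / 2 - 1) (1 / 2) s
        + 1 / 2 * g (-(3 : ℝ) / 2) (1 / 2 - 1) s) * y ^ (-(2 : ℝ)))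
      ((-(3 : ℝ) / 2 * ((-(3 : ℝ) / 2 - 1) * g (-(3 : ℝ) / 2 - 1 - 1) (1 / 2) x
          + 1 / 2 * g (-(3 : ℝ) / 2 - 1) (1 / 2 - 1) x)
        + 1 / 2 * (-(3 : ℝ) / 2 * g (-(3 : ℝ) / 2 - 1) (1 / 2 - 1) x
          + (1 / 2 - 1) * g (-(3 : ℝ) / 2) (1 / 2 - 1 - 1) x)) * y ^ (-(2 : ℝ))) x := by
    exact ((HasDerivAt.const_mul (-(3 : ℝ) / 2) (hasDerivAt_g _ _ hx)).add
      (HasDerivAt.const_mul (1 / 2 : ℝ) (hasDerivAt_g _ _ hx))).mul_const _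
  rw [hev.deriv_eq, H.deriv]
  simp only [g]
  rw [rpow_up hx 4 (-(3 : ℝ) / 2 - 1 - 1) (by norm_num),
      rpow_up hx 3 (-(3 : ℝ) / 2 - 1) (by norm_num),
      rpow_up hx 2 (-(3 : ℝ) / 2) (by norm_num),
      rpow_downpos h1x 1 (1 / 2) (by norm_num),
      rpow_downneg h1x 0 (1 / 2 - 1) (by norm_num),
      rpow_downneg h1x 1 (1 / 2 - 1 - 1) (by norm_num),
      rpow_negnat hy 2 (-(2 : ℝ)) (by norm_num)]
  set t := Real.sqrt (1 + x) with ht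
  have ht0 : t ≠ 0 := ne_of_gt (by rw [ht]; exact Real.sqrt_pos.mpr h1x)
  field_simp
  ring

lemma rxx2 (x y : ℝ) : rxx x y 2 = 0 := by
  show deriv (fun s => rx s y 2) x = _
  have hf : (fun s : ℝ => rx s y 2) = fun _ => 0 := by funext s; rw [rx2']
  rw [hf, deriv_const]

lemma rxy0 {x y : ℝ} (hx : 0 < x) (hy : 0 < y) :
    rxy x y 0 = -(2 * x + 3) / (2 * x) := by
  have hx0 : x ≠ 0 := hx.ne'
  show deriv (fun s => rx x s 0) y = _
  have hf : (fun s : ℝ => rx x s 0) = fun s => -s * ((3 / 2) * x⁻¹ + 1) := by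
    funext s; rw [rx0' hx s]
  have H : HasDerivAt (fun s : ℝ => -s * ((3 / 2) * x⁻¹ + 1))
      (-1 * ((3 / 2) * x⁻¹ + 1)) y := by
    exact (hasDerivAt_id y).neg.mul_const _
  rw [hf, H.deriv]
  field_simp
  ring

lemma rxy1 {x y : ℝ} (hx : 0 < x) (hy : 0 < y) :
    rxy x y 1 = (2 * x + 3) * Real.sqrt x / (x ^ 3 * Real.sqrt (1 + x) * y ^ 3) := by
  have h1x : (0:ℝ) < 1 + x := by linarith
  have hx0 : x ≠ 0 := hx.ne'
  have hy0 : y ≠ 0 := hy.ne'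
  show deriv (fun s => rx x s 1) y = _
  have hf : (fun s : ℝ => rx x s 1) = fun s =>
      (-(3 : ℝ) / 2 * g (-(3 : ℝ) / 2 - 1) (1 / 2) x
        + 1 / 2 * g (-(3 : ℝ) / 2) (1 / 2 - 1) x) * s ^ (-(2 : ℝ)) := by
    funext s; rw [rx1' hx s]
  have H : HasDerivAt (fun s : ℝ =>
      (-(3 : ℝ) / 2 * g (-(3 : ℝ) / 2 - 1) (1 / 2) x
        + 1 / 2 * g (-(3 : ℝ) / 2) (1 / 2 - 1) x) * s ^ (-(2 : ℝ)))
      ((-(3 : ℝ) / 2 * g (-(3 : ℝ) / 2 - 1) (1 / 2) x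
        + 1 / 2 * g (-(3 : ℝ) / 2) (1 / 2 - 1) x) * (-(2 : ℝ) * y ^ (-(2 : ℝ) - 1))) y :=
    HasDerivAt.const_mul _ (Real.hasDerivAt_rpow_const (Or.inl hy.ne'))
  rw [hf, H.deriv]
  simp only [g]
  rw [rpow_up hx 3 (-(3 : ℝ) / 2 - 1) (by norm_num),
      rpow_up hx 2 (-(3 : ℝ) / 2) (by norm_num),
      rpow_downpos h1x 1 (1 / 2) (by norm_num),
      rpow_downneg h1x 0 (1 / 2 - 1) (by norm_num),
      rpow_negnat hy 3 (-(2 : ℝ) - 1) (by norm_num)]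
  set t := Real.sqrt (1 + x) with ht
  have ht0 : t ≠ 0 := ne_of_gt (by rw [ht]; exact Real.sqrt_pos.mpr h1x)
  field_simp
  ring

lemma rxy2 (x y : ℝ) : rxy x y 2 = 0 := by
  show deriv (fun s => rx x s 2) y = _
  have hf : (fun s : ℝ => rx x s 2) = fun _ => 0 := by funext s; rw [rx2']
  rw [hf, deriv_const]

lemma ryy0 {y : ℝ} (hy : 0 < y) (x : ℝ) :
    ryy x y 0 = -(3 / y) := by
  have hy0 : y ≠ 0 := hy.ne'
  show deriv (fun s => ry x s 0) y = _
  have hev : (fun s => ry x s 0) =ᶠ[nhds y] fun s =>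
      -((3 / 2) * Real.log x + 3 * Real.log s + x) - 3 := by
    filter_upwards [eventually_gt_nhds hy] with s hs
    rw [ry0 hs x]
  have H : HasDerivAt (fun s : ℝ => -((3 / 2) * Real.log x + 3 * Real.log s + x) - 3)
      (-(3 * y⁻¹)) y := by
    have h0 : HasDerivAt (fun s : ℝ => (3 / 2) * Real.log x + 3 * Real.log s + x)
        (3 * y⁻¹) y :=
      (((Real.hasDerivAt_log hy.ne').const_mul (3 : ℝ)).const_add
        ((3 / 2) * Real.log x)).add_const x
    exact h0.neg.sub_const 3
  rw [hev.deriv_eq, H.deriv]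
  field_simp

lemma ryy1 {x y : ℝ} (hx : 0 < x) (hy : 0 < y) :
    ryy x y 1 = 6 * Real.sqrt x * (1 + x) / (x ^ 2 * Real.sqrt (1 + x) * y ^ 4) := by
  have h1x : (0:ℝ) < 1 + x := by linarith
  have hx0 : x ≠ 0 := hx.ne'
  have hy0 : y ≠ 0 := hy.ne'
  show deriv (fun s => ry x s 1) y = _
  have hev : (fun s => ry x s 1) =ᶠ[nhds y] fun s =>
      (x ^ (-(3 : ℝ) / 2) * (1 + x) ^ ((1 : ℝ) / 2)) * (-(2 : ℝ) * s ^ (-(2 : ℝ) - 1)) := by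
    filter_upwards [eventually_gt_nhds hy] with s hs
    rw [ry1' hs x]
  have H : HasDerivAt (fun s : ℝ =>
      (x ^ (-(3 : ℝ) / 2) * (1 + x) ^ ((1 : ℝ) / 2)) * (-(2 : ℝ) * s ^ (-(2 : ℝ) - 1)))
      ((x ^ (-(3 : ℝ) / 2) * (1 + x) ^ ((1 : ℝ) / 2))
        * (-(2 : ℝ) * ((-(2 : ℝ) - 1) * y ^ (-(2 : ℝ) - 1 - 1)))) y :=
    HasDerivAt.const_mul _ (HasDerivAt.const_mul (-(2 : ℝ))
      (Real.hasDerivAt_rpow_const (Or.inl hy.ne')))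
  rw [hev.deriv_eq, H.deriv]
  rw [rpow_up hx 2 (-(3 : ℝ) / 2) (by norm_num),
      rpow_downpos h1x 1 ((1 : ℝ) / 2) (by norm_num),
      rpow_negnat hy 4 (-(2 : ℝ) - 1 - 1) (by norm_num)]
  set t := Real.sqrt (1 + x) with ht
  have ht0 : t ≠ 0 := ne_of_gt (by rw [ht]; exact Real.sqrt_pos.mpr h1x)
  field_simp
  ring

lemma ryy2 (x y : ℝ) : ryy x y 2 = 0 := by
  show deriv (fun s => ry x s 2) y = _
  have hf : (fun s : ℝ => ry x s 2) = fun _ => 1 := by funext s; rw [ry2]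
  rw [hf, deriv_const]

end Blaschke

open Blaschke in
/-- The Blaschke-metric coefficients `L`, `M`, `N` of Hildebrand's case-1 immersion. -/
theorem blaschke_coefficients_case1 :
    ∀ x y : ℝ, 0 < x → 0 < y →
      Matrix.det (Matrix.of ![rx x y, ry x y, rxx x y]) =
          (1 / 8) * (4 * x + 3) * (2 * x + 3) ^ 2 /
            (x ^ ((9 : ℝ) / 2) * y * (1 + x) ^ ((3 : ℝ) / 2)) ∧
      Matrix.det (Matrix.of ![rx x y, ry x y, rxy x y]) =
          (3 / 4) * (2 * x + 3) ^ 2 / (x ^ ((7 : ℝ) / 2) * y ^ 2 * Real.sqrt (1 + x)) ∧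
      Matrix.det (Matrix.of ![rx x y, ry x y, ryy x y]) =
          (3 / 2) * (2 * x + 3) ^ 2 / (x ^ ((5 : ℝ) / 2) * y ^ 3 * Real.sqrt (1 + x)) := by
  intro x y hx hy
  have h1x : (0:ℝ) < 1 + x := by linarith
  have hx0 : x ≠ 0 := hx.ne'
  have hy0 : y ≠ 0 := hy.ne'
  have hS0 : Real.sqrt x ≠ 0 := ne_of_gt (Real.sqrt_pos.mpr hx)
  refine ⟨?_, ?_, ?_⟩
  · rw [Matrix.det_fin_three]
    simp only [Matrix.of_apply, Matrix.cons_val', Matrix.cons_val_zero, Matrix.cons_val_one,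
      Matrix.head_cons, Matrix.empty_val', Matrix.cons_val_fin_one, Matrix.head_fin_const,
      Matrix.cons_val_two, Matrix.tail_cons]
    rw [rx0 hx y, rx1 hx hy, rx2' x y, ry0 hy x, ry1 hx hy, ry2 x y,
      rxx0 hx y, rxx1 hx hy, rxx2 x y]
    rw [rpow_downpos hx 5 ((9 : ℝ) / 2) (by norm_num),
      rpow_uppos h1x 1 ((3 : ℝ) / 2) (by norm_num)]
    set t := Real.sqrt (1 + x) with ht
    have ht0 : t ≠ 0 := ne_of_gt (by rw [ht]; exact Real.sqrt_pos.mpr h1x)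
    field_simp
    ring
  · rw [Matrix.det_fin_three]
    simp only [Matrix.of_apply, Matrix.cons_val', Matrix.cons_val_zero, Matrix.cons_val_one,
      Matrix.head_cons, Matrix.empty_val', Matrix.cons_val_fin_one, Matrix.head_fin_const,
      Matrix.cons_val_two, Matrix.tail_cons]
    rw [rx0 hx y, rx1 hx hy, rx2' x y, ry0 hy x, ry1 hx hy, ry2 x y,
      rxy0 hx hy, rxy1 hx hy, rxy2 x y]
    rw [rpow_downpos hx 4 ((7 : ℝ) / 2) (by norm_num)]
    set t := Real.sqrt (1 + x) with ht
    have ht0 : t ≠ 0 := ne_of_gt (by rw [ht]; exact Real.sqrt_pos.mpr h1x)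
    field_simp
    ring
  · rw [Matrix.det_fin_three]
    simp only [Matrix.of_apply, Matrix.cons_val', Matrix.cons_val_zero, Matrix.cons_val_one,
      Matrix.head_cons, Matrix.empty_val', Matrix.cons_val_fin_one, Matrix.head_fin_const,
      Matrix.cons_val_two, Matrix.tail_cons]
    rw [rx0 hx y, rx1 hx hy, rx2' x y, ry0 hy x, ry1 hx hy, ry2 x y,
      ryy0 hy x, ryy1 hx hy, ryy2 x y]
    rw [rpow_downpos hx 3 ((5 : ℝ) / 2) (by norm_num)]
    set t := Real.sqrt (1 + x) with ht
    have ht0 : t ≠ 0 := ne_of_gt (by rw [ht]; exact Real.sqrt_pos.mpr h1x)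
    field_simp
    ring
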